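/- For K_s > 0, let q_s = (4K_s + K_s²)^{1/4} and α_s = √2/√(2 + K_s - q_s²). Then α_s > 1, and q_s is the unique point in (√K_s, √(K_s+4)) where k''(q) = 0, with k'(q_s) = α_s. -/

import Mathlib

open Real


lemma hasDerivAt_k (Ks q : ℝ) (hq : 0 < q) (h1 : Ks < q ^ 2) (h2 : q ^ 2 < Ks + 4) :
    HasDerivAt (fun q => 2 * Real.arcsin (Real.sqrt (q ^ 2 - Ks) / 2))
      (2 * q / Real.sqrt ((q ^ 2 - Ks) * (4 + Ks - q ^ 2))) q := by
  have hu : 0 < q ^ 2 - Ks := by linarith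
  have hv : 0 < 4 + Ks - q ^ 2 := by linarith
  have hsu : 0 < Real.sqrt (q ^ 2 - Ks) := Real.sqrt_pos.2 hu
  have hsv : 0 < Real.sqrt (4 + Ks - q ^ 2) := Real.sqrt_pos.2 hv
  have hs4 : Real.sqrt 4 = 2 := by
    rw [show (4:ℝ) = 2^2 by norm_num, Real.sqrt_sq (by norm_num)]
  have hd1 : HasDerivAt (fun q : ℝ => q ^ 2 - Ks) (2 * q) q := by
    simpa using (hasDerivAt_pow 2 q).sub_const Ks
  have hd2 := hd1.sqrt hu.ne'
  have hd3 : HasDerivAt (fun q : ℝ => Real.sqrt (q ^ 2 - Ks) / 2)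
      (q / (2 * Real.sqrt (q ^ 2 - Ks))) q := by
    have := hd2.div_const 2
    refine this.congr_deriv (Eq.symm ?_)
    field_simp
  set x := Real.sqrt (q ^ 2 - Ks) / 2 with hxdef
  have hx0 : 0 ≤ x := by positivity
  have hx1 : x < 1 := by
    have : Real.sqrt (q ^ 2 - Ks) < 2 := by
      rw [← hs4]
      exact Real.sqrt_lt_sqrt hu.le (by linarith)
    simp only [hxdef]; linarith
  have harc := (Real.hasDerivAt_arcsin (by linarith) (ne_of_lt hx1)).comp q hd3
  have hmain := harc.const_mul 2
  refine hmain.congr_deriv (Eq.symm ?_)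
  have hx2 : 1 - x ^ 2 = (4 + Ks - q ^ 2) / 4 := by
    have : Real.sqrt (q ^ 2 - Ks) ^ 2 = q ^ 2 - Ks := Real.sq_sqrt hu.le
    simp only [hxdef]
    field_simp
    linarith
  rw [hx2]
  have h4 : Real.sqrt ((4 + Ks - q ^ 2) / 4) = Real.sqrt (4 + Ks - q ^ 2) / 2 := by
    rw [Real.sqrt_div hv.le, hs4]
  have h5 : Real.sqrt ((q ^ 2 - Ks) * (4 + Ks - q ^ 2))
      = Real.sqrt (q ^ 2 - Ks) * Real.sqrt (4 + Ks - q ^ 2) :=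
    Real.sqrt_mul hu.le _
  rw [h4, h5]
  field_simp

lemma hasDerivAt_kp (Ks q : ℝ) (h1 : Ks < q ^ 2) (h2 : q ^ 2 < Ks + 4) :
    HasDerivAt (fun q => 2 * q / Real.sqrt ((q ^ 2 - Ks) * (4 + Ks - q ^ 2)))
      (2 * (q ^ 4 - (4 * Ks + Ks ^ 2)) / Real.sqrt ((q ^ 2 - Ks) * (4 + Ks - q ^ 2)) ^ 3) q := by
  have hu : 0 < q ^ 2 - Ks := by linarith
  have hv : 0 < 4 + Ks - q ^ 2 := by linarith
  have hg : 0 < (q ^ 2 - Ks) * (4 + Ks - q ^ 2) := mul_pos hu hv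
  set s := Real.sqrt ((q ^ 2 - Ks) * (4 + Ks - q ^ 2)) with hsdef
  have hs : 0 < s := Real.sqrt_pos.2 hg
  have hs2 : s ^ 2 = (q ^ 2 - Ks) * (4 + Ks - q ^ 2) := Real.sq_sqrt hg.le
  have hd1 : HasDerivAt (fun q : ℝ => q ^ 2 - Ks) (2 * q) q := by
    simpa using (hasDerivAt_pow 2 q).sub_const Ks
  have hd2 : HasDerivAt (fun q : ℝ => 4 + Ks - q ^ 2) (-(2 * q)) q := by
    simpa using ((hasDerivAt_pow 2 q).const_sub (4 + Ks))
  have hdg : HasDerivAt (fun q : ℝ => (q ^ 2 - Ks) * (4 + Ks - q ^ 2))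
      (2 * q * (4 + Ks - q ^ 2) + (q ^ 2 - Ks) * (-(2 * q))) q := hd1.mul hd2
  have hds := hdg.sqrt hg.ne'
  have hnum : HasDerivAt (fun q : ℝ => 2 * q) 2 q := by
    simpa using (hasDerivAt_id q).const_mul 2
  have hd := hnum.div hds hs.ne'
  refine hd.congr_deriv (Eq.symm ?_)
  rw [← hsdef]
  rw [div_eq_div_iff (by positivity) (by positivity)]
  field_simp
  linear_combination (-1) * hs2

theorem front_point_properties (Ks : ℝ) (hKs : 0 < Ks) :
    ∀ qs αs : ℝ, qs = (4 * Ks + Ks ^ 2) ^ ((1:ℝ) / 4) →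
      αs = Real.sqrt 2 / Real.sqrt (2 + Ks - qs ^ 2) →
    (1 < αs ∧
     Real.sqrt Ks < qs ∧ qs < Real.sqrt (Ks + 4) ∧
     deriv (fun q => 2 * Real.arcsin (Real.sqrt (q ^ 2 - Ks) / 2)) qs = αs ∧
     (∀ q : ℝ, Real.sqrt Ks < q → q < Real.sqrt (Ks + 4) →
       (deriv (deriv (fun q => 2 * Real.arcsin (Real.sqrt (q ^ 2 - Ks) / 2))) q = 0 ↔
         q = qs))) := by
  intro qs αs hqs hαs
  have hX : (0:ℝ) < 4 * Ks + Ks ^ 2 := by nlinarith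
  have hqs0 : 0 < qs := hqs ▸ Real.rpow_pos_of_pos hX _
  have hroot : ∀ y : ℝ, 0 ≤ y → (y ^ 4) ^ ((1:ℝ)/4) = y := by
    intro y hy
    rw [← Real.rpow_natCast y 4, ← Real.rpow_mul hy]
    norm_num
  have hqs4 : qs ^ 4 = 4 * Ks + Ks ^ 2 := by
    have := hroot qs hqs0.le
    rw [hqs] at this ⊢
    rw [← Real.rpow_natCast _ 4, ← Real.rpow_mul hX.le]
    norm_num
  have hqs2a : Ks < qs ^ 2 := by nlinarith [sq_nonneg qs, sq_nonneg (qs^2 - Ks), sq_nonneg (qs^2 + Ks)]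
  have hqs2b : qs ^ 2 < Ks + 2 := by nlinarith [sq_nonneg qs, sq_nonneg (qs^2 - Ks - 2)]
  have hqs2c : qs ^ 2 < Ks + 4 := by linarith
  have hc : 0 < 2 + Ks - qs ^ 2 := by linarith
  have hc2 : 2 + Ks - qs ^ 2 < 2 := by linarith
  -- interval membership
  have hmem1 : Real.sqrt Ks < qs := (Real.sqrt_lt' hqs0).2 hqs2a
  have hmem2 : qs < Real.sqrt (Ks + 4) := (Real.lt_sqrt hqs0.le).2 hqs2c
  -- alpha > 1
  have hsc : 0 < Real.sqrt (2 + Ks - qs ^ 2) := Real.sqrt_pos.2 hc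
  have halpha : 1 < αs := by
    rw [hαs, lt_div_iff₀ hsc, one_mul]
    exact Real.sqrt_lt_sqrt hc.le hc2
  refine ⟨halpha, hmem1, hmem2, ?_, ?_⟩
  · -- k'(qs) = αs
    have hd := (hasDerivAt_k Ks qs hqs0 hqs2a hqs2c).deriv
    rw [hd, hαs]
    have hgq : (qs ^ 2 - Ks) * (4 + Ks - qs ^ 2) = 2 * qs ^ 2 * (2 + Ks - qs ^ 2) := by
      linear_combination hqs4
    rw [hgq]
    have h1 : Real.sqrt (2 * qs ^ 2 * (2 + Ks - qs ^ 2))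
        = Real.sqrt 2 * qs * Real.sqrt (2 + Ks - qs ^ 2) := by
      rw [show 2 * qs ^ 2 * (2 + Ks - qs ^ 2) = (2 * qs^2) * (2 + Ks - qs ^ 2) by ring,
        Real.sqrt_mul (by positivity), Real.sqrt_mul (by norm_num : (0:ℝ) ≤ 2),
        Real.sqrt_sq hqs0.le]
    rw [h1]
    have hs2 : (0:ℝ) < Real.sqrt 2 := by positivity
    rw [div_eq_div_iff (by positivity) (by positivity)]
    have hsq : Real.sqrt 2 ^ 2 = 2 := Real.sq_sqrt (by norm_num)
    linear_combination (-qs * Real.sqrt (2 + Ks - qs ^ 2)) * hsq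
  · intro q hq1 hq2
    have hq0 : 0 < q := lt_of_le_of_lt (Real.sqrt_nonneg Ks) hq1
    have hq2a : Ks < q ^ 2 := (Real.sqrt_lt' hq0).1 hq1
    have hq2c : q ^ 2 < Ks + 4 := (Real.lt_sqrt hq0.le).1 hq2
    -- deriv deriv = D q
    have hev : deriv (fun q => 2 * Real.arcsin (Real.sqrt (q ^ 2 - Ks) / 2))
        =ᶠ[nhds q] fun q => 2 * q / Real.sqrt ((q ^ 2 - Ks) * (4 + Ks - q ^ 2)) := by
      have hm : Set.Ioo (Real.sqrt Ks) (Real.sqrt (Ks + 4)) ∈ nhds q :=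
        Ioo_mem_nhds hq1 hq2
      filter_upwards [hm] with y hy
      have hy0 : 0 < y := lt_of_le_of_lt (Real.sqrt_nonneg Ks) hy.1
      exact (hasDerivAt_k Ks y hy0 ((Real.sqrt_lt' hy0).1 hy.1)
        ((Real.lt_sqrt hy0.le).1 hy.2)).deriv
    have hdd : deriv (deriv (fun q => 2 * Real.arcsin (Real.sqrt (q ^ 2 - Ks) / 2))) q
        = 2 * (q ^ 4 - (4 * Ks + Ks ^ 2)) / Real.sqrt ((q ^ 2 - Ks) * (4 + Ks - q ^ 2)) ^ 3 := by
      rw [Filter.EventuallyEq.deriv_eq hev]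
      exact (hasDerivAt_kp Ks q hq2a hq2c).deriv
    rw [hdd]
    have hg : 0 < (q ^ 2 - Ks) * (4 + Ks - q ^ 2) := mul_pos (by linarith) (by linarith)
    have hs3 : 0 < Real.sqrt ((q ^ 2 - Ks) * (4 + Ks - q ^ 2)) ^ 3 := by positivity
    constructor
    · intro h
      have hnum : q ^ 4 - (4 * Ks + Ks ^ 2) = 0 := by
        rcases div_eq_zero_iff.mp h with h | h
        · linarith
        · exact absurd h (by positivity)
      have hq4 : q ^ 4 = 4 * Ks + Ks ^ 2 := by linarith
      calc q = (q ^ 4) ^ ((1:ℝ)/4) := (hroot q hq0.le).symm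
        _ = qs := by rw [hq4, ← hqs]
    · intro h
      subst h
      rw [hqs4]
      simp
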